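/- Let I be a linear order and let χ be an infinite cardinal with χ < |I|, where |I| denotes the cardinality of the underlying set of I. Then there exists i ∈ I such that the initial segment {j ∈ I : j ≤ i} has cardinality at least χ and the final segment {j ∈ I : i ≤ j} has cardinality at least χ. -/

import Mathlib

universe u

open Cardinal Ordinal Set

/-- Auxiliary lemma: in a linear order, a set of cardinality greater than an
infinite cardinal `χ` contains a point whose lower set has cardinality at
least `χ`. -/
lemma aux_key {L : Type u} [LinearOrder L] (χ : Cardinal.{u})
    (hχ : Cardinal.aleph0 ≤ χ) (S : Set L) (hS : χ < Cardinal.mk S)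
    (h : ∀ s ∈ S, Cardinal.mk ↥{j : L | j ≤ s} < χ) : False := by
  classical
  set c : Cardinal.{u} := Order.succ χ with hc
  haveI hwo : IsWellOrder c.ord.ToType (· < ·) := isWellOrder_lt
  -- A "guarded" lower-set function with an unconditional cardinality bound.
  set D : L → Set L := fun v => if v ∈ S then {j : L | j ≤ v} else ∅ with hD
  have hDcard : ∀ v : L, Cardinal.mk (D v) < χ := by
    intro v
    by_cases hv : v ∈ S
    · simpa [hD, hv] using h v hv
    · simp only [hD, hv, if_neg, if_false]
      simpa using (aleph0_pos.trans_le hχ)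
  -- the nonemptiness used for recursive choice
  have hne : ∀ (x : c.ord.ToType) (g : ∀ y : c.ord.ToType, y < x → L),
      (S \ ⋃ (y : c.ord.ToType) (hy : y < x), D (g y hy)).Nonempty := by
    intro x g
    have hU : Cardinal.mk ↥(⋃ (y : c.ord.ToType) (hy : y < x), D (g y hy)) ≤ χ := by
      have h1 : (⋃ (y : c.ord.ToType) (hy : y < x), D (g y hy))
          = ⋃ (z : ↥(Iio x)), D (g z.1 z.2) := by
        ext w; simp [Set.mem_iUnion, Iio]
      rw [h1]
      calc Cardinal.mk ↥(⋃ (z : ↥(Iio x)), D (g z.1 z.2))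
          ≤ Cardinal.mk ↥(Iio x) * ⨆ (z : ↥(Iio x)), Cardinal.mk ↥(D (g z.1 z.2)) :=
            Cardinal.mk_iUnion_le _
        _ ≤ χ * χ := by
            apply mul_le_mul'
            · exact Order.lt_succ_iff.mp (Cardinal.mk_Iio_ord_toType x)
            · exact ciSup_le' fun z => (hDcard _).le
        _ = χ := Cardinal.mul_eq_self hχ
    by_contra hemp
    rw [Set.not_nonempty_iff_eq_empty, Set.diff_eq_empty] at hemp
    exact absurd ((Cardinal.mk_le_mk_of_subset hemp).trans hU) (not_le.mpr hS)
  -- define the strictly increasing sequence by well-founded recursion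
  have wf : WellFounded ((· < ·) : c.ord.ToType → c.ord.ToType → Prop) := (wellFoundedLT_toType c.ord).wf
  set f : c.ord.ToType → L := WellFounded.fix wf (fun x g => (hne x g).choose) with hf
  have hfix : ∀ x : c.ord.ToType, f x ∈ S \ ⋃ (y : c.ord.ToType) (hy : y < x), D (f y) := by
    intro x
    have := WellFounded.fix_eq wf (fun x g => (hne x g).choose) x
    rw [hf, this]
    exact (hne x fun y _ => f y).choose_spec
  have hfS : ∀ x : c.ord.ToType, f x ∈ S := fun x => (hfix x).1
  have hmono : ∀ {y x : c.ord.ToType}, y < x → f y < f x := by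
    intro y x hyx
    have h2 := (hfix x).2
    rw [Set.mem_iUnion] at h2
    push_neg at h2
    have h3 := h2 y
    rw [Set.mem_iUnion] at h3
    push_neg at h3
    have h4 := h3 hyx
    have : f x ∉ {j : L | j ≤ f y} := by
      simpa [hD, hfS y] using h4
    exact lt_of_not_ge this
  -- the element at position `χ.ord`
  set x₀ : c.ord.ToType := Ordinal.enum (· < ·)
    ⟨χ.ord, by rw [Ordinal.type_toType]; exact Set.mem_Iio.mpr (Cardinal.ord_lt_ord.mpr (Order.lt_succ χ))⟩ with hx₀
  -- {y // y < x₀} has cardinality χ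
  have hIio : Cardinal.mk {y : c.ord.ToType // y < x₀} = χ := by
    rw [← Ordinal.card_typein (r := (· < ·)) x₀, hx₀]; exact (congrArg Ordinal.card (Ordinal.typein_enum _ _)).trans (Cardinal.card_ord χ)
  -- f maps it injectively into {j | j ≤ f x₀}
  have hinj : Function.Injective fun (y : {y : c.ord.ToType // y < x₀}) =>
      (⟨f y.1, le_of_lt (hmono y.2)⟩ : ↥{j : L | j ≤ f x₀}) := by
    intro a b hab
    have : f a.1 = f b.1 := congrArg Subtype.val hab
    rcases lt_trichotomy a.1 b.1 with h' | h' | h'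
    · exact absurd this (ne_of_lt (hmono h'))
    · exact Subtype.ext h'
    · exact absurd this.symm (ne_of_lt (hmono h'))
  have hle : χ ≤ Cardinal.mk ↥{j : L | j ≤ f x₀} := by
    rw [← hIio]
    exact Cardinal.mk_le_of_injective hinj
  exact absurd hle (not_le.mpr (h _ (hfS x₀)))

/-- Lemma `lo-cut`: in a linear order `I` of cardinality greater than an infinite
cardinal `χ`, there is a point `i` whose initial segment `{j | j ≤ i}` and final
segment `{j | i ≤ j}` both have cardinality at least `χ`. -/
theorem stmt_0 {I : Type u} [LinearOrder I] (χ : Cardinal.{u})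
    (hχ : Cardinal.aleph0 ≤ χ) (hI : χ < Cardinal.mk I) :
    ∃ i : I, χ ≤ Cardinal.mk ↥{j : I | j ≤ i} ∧ χ ≤ Cardinal.mk ↥{j : I | i ≤ j} := by
  by_contra hcon
  push_neg at hcon
  have hAB : ∀ i : I, Cardinal.mk ↥{j : I | j ≤ i} < χ ∨ Cardinal.mk ↥{j : I | i ≤ j} < χ := by
    intro i
    rcases le_or_gt χ (Cardinal.mk ↥{j : I | j ≤ i}) with h1 | h1
    · exact Or.inr (hcon i h1)
    · exact Or.inl h1
  set A : Set I := {i : I | Cardinal.mk ↥{j : I | j ≤ i} < χ} with hA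
  set B : Set I := {i : I | Cardinal.mk ↥{j : I | i ≤ j} < χ} with hB
  have hcover : A ∪ B = Set.univ := by
    ext i; simpa [hA, hB] using hAB i
  have hsum : χ < Cardinal.mk A + Cardinal.mk B := by
    calc χ < Cardinal.mk I := hI
      _ = Cardinal.mk ↥(A ∪ B) := by rw [hcover, Cardinal.mk_univ]
      _ ≤ Cardinal.mk A + Cardinal.mk B := Cardinal.mk_union_le A B
  have : χ < Cardinal.mk A ∨ χ < Cardinal.mk B := by
    by_contra hno
    push_neg at hno
    exact absurd hsum (not_lt.mpr (Cardinal.add_le_of_le hχ hno.1 hno.2))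
  rcases this with hbig | hbig
  · exact aux_key χ hχ A hbig (fun s hs => hs)
  · exact aux_key (L := Iᵒᵈ) χ hχ B hbig (fun s hs => hs)
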